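/- Let a monoid V act on an additive commutative monoid H, suppose the path identity holds, and let k ≥ 1 be such that (k+1) • x = k • x for all x : H. Then for all u, w : V: k • ((u * w) • 0) + u • 0 = k • ((u * w) • 0). (The element ω•(uw0) absorbs u0.) -/
import Mathlib

lemma smul_nsmul_aux {V H : Type*} [Monoid V] [AddCommMonoid H] [MulAction V H]
    (path : ∀ (v : V) (g h : H), v • g + v • h = v • (g + h) + v • (0 : H))
    (u : V) (a : H) : ∀ m : ℕ, (m + 1) • (u • a) = u • ((m + 1) • a) + m • (u • (0 : H)) := by
  intro m
  induction m with
  | zero => simp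
  | succ m ih =>
    rw [succ_nsmul (u • a) (m + 1), ih, add_assoc,
      add_comm (m • (u • (0 : H))) (u • a), ← add_assoc,
      path u ((m + 1) • a) a, ← succ_nsmul a (m + 1), add_assoc,
      add_comm (u • (0 : H)) (m • (u • (0 : H))), ← succ_nsmul]

/-- In an aperiodic path algebra, the element `ω • (uw0)` absorbs `u0`:
`ω • ((u * w) • 0) + u • 0 = ω • ((u * w) • 0)`. -/
theorem omega_uw_absorbs {V H : Type*} [Monoid V] [AddCommMonoid H]
    [MulAction V H]
    (path : ∀ (v : V) (g h : H), v • g + v • h = v • (g + h) + v • (0 : H))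
    (k : ℕ) (hk : 1 ≤ k) (aper : ∀ x : H, (k + 1) • x = k • x) :
    ∀ u w : V, k • ((u * w) • (0 : H)) + u • (0 : H) = k • ((u * w) • (0 : H)) := by
  intro u w
  obtain ⟨m, rfl⟩ : ∃ m, k = m + 1 := ⟨k - 1, (Nat.succ_pred_eq_of_pos hk).symm⟩
  set a := w • (0 : H)
  have hx : (u * w) • (0 : H) = u • a := mul_smul u w 0
  rw [hx]
  have h1 := smul_nsmul_aux path u a m
  have h2 := smul_nsmul_aux path u a (m + 1)
  calc (m + 1) • (u • a) + u • 0
      = u • ((m + 1) • a) + m • (u • (0 : H)) + u • 0 := by rw [h1]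
    _ = u • ((m + 1 + 1) • a) + (m + 1) • (u • (0 : H)) := by
        rw [aper a, add_assoc, ← succ_nsmul]
    _ = (m + 1 + 1) • (u • a) := h2.symm
    _ = (m + 1) • (u • a) := aper _
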